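/- Let 0 < |λ| < 1/2 and r_± = √(1/2 ± √(1/4 - λ²)). On the boundary circle r = r_±, the vector ν_± = ±(r_± cos φ, -(λ/r_±) cos φ, r_± sin φ, (λ/r_±) sin φ) is a unit vector tangent to Σ_λ (a multiple of X_r), orthogonal to X_φ, and satisfies ν_± = √(1-4λ²)·X ∓ 2λ·JX, where X is the position vector and J(x₁,x₂,y₁,y₂) = (-x₂,x₁,y₂,-y₁). -/

import Mathlib

/-- The Lagrangian catenoid parametrization in ℝ⁴. -/
noncomputable def X (lam r φ : ℝ) : EuclideanSpace ℝ (Fin 4) :=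
  (WithLp.equiv 2 (Fin 4 → ℝ)).symm
    ![r * Real.cos φ, (lam / r) * Real.cos φ, r * Real.sin φ, -(lam / r) * Real.sin φ]

/-- The complex structure `J(x₁,x₂,y₁,y₂) = (-x₂,x₁,y₂,-y₁)` on ℝ⁴. -/
noncomputable def Jmap (v : EuclideanSpace ℝ (Fin 4)) : EuclideanSpace ℝ (Fin 4) :=
  (WithLp.equiv 2 (Fin 4 → ℝ)).symm ![-(v 1), v 0, v 3, -(v 2)]

/-- The conormal `ν_ε = ε (r_ε cos φ, -(λ/r_ε) cos φ, r_ε sin φ, (λ/r_ε) sin φ)`,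
where `ε = ±1` and `r_ε = √(1/2 + ε √(1/4 - λ²))`. -/
noncomputable def nu (lam ε φ : ℝ) : EuclideanSpace ℝ (Fin 4) :=
  ε • ((WithLp.equiv 2 (Fin 4 → ℝ)).symm
    ![Real.sqrt (1 / 2 + ε * Real.sqrt (1 / 4 - lam ^ 2)) * Real.cos φ,
      -(lam / Real.sqrt (1 / 2 + ε * Real.sqrt (1 / 4 - lam ^ 2))) * Real.cos φ,
      Real.sqrt (1 / 2 + ε * Real.sqrt (1 / 4 - lam ^ 2)) * Real.sin φ,
      (lam / Real.sqrt (1 / 2 + ε * Real.sqrt (1 / 4 - lam ^ 2))) * Real.sin φ])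

lemma hXr (lam φ r : ℝ) (hr : r ≠ 0) :
    HasDerivAt (fun s => X lam s φ)
      ((WithLp.equiv 2 (Fin 4 → ℝ)).symm
        ![Real.cos φ, -(lam / r ^ 2) * Real.cos φ, Real.sin φ, (lam / r ^ 2) * Real.sin φ]) r := by
  have h : HasDerivAt (fun s => (![s * Real.cos φ, (lam / s) * Real.cos φ, s * Real.sin φ,
      -(lam / s) * Real.sin φ] : Fin 4 → ℝ))
      (![Real.cos φ, -(lam / r ^ 2) * Real.cos φ, Real.sin φ, (lam / r ^ 2) * Real.sin φ]) r := by
    rw [hasDerivAt_pi]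
    intro i
    fin_cases i
    · simpa using (hasDerivAt_id r).mul_const (Real.cos φ)
    · show HasDerivAt (fun s : ℝ => lam / s * Real.cos φ) (-(lam / r ^ 2) * Real.cos φ) r
      have e : -(lam / r ^ 2) * Real.cos φ = lam * -(r ^ 2)⁻¹ * Real.cos φ := by
        field_simp
      rw [e]
      simpa [div_eq_mul_inv] using ((hasDerivAt_inv hr).const_mul lam).mul_const (Real.cos φ)
    · simpa using (hasDerivAt_id r).mul_const (Real.sin φ)
    · show HasDerivAt (fun s : ℝ => -(lam / s) * Real.sin φ) ((lam / r ^ 2) * Real.sin φ) r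
      have e : (lam / r ^ 2) * Real.sin φ = -(lam * -(r ^ 2)⁻¹) * Real.sin φ := by
        field_simp
      rw [e]
      simpa [div_eq_mul_inv] using (((hasDerivAt_inv hr).const_mul lam).neg).mul_const (Real.sin φ)
  exact ((PiLp.continuousLinearEquiv 2 ℝ (fun _ : Fin 4 => ℝ)).symm :
    (Fin 4 → ℝ) →L[ℝ] EuclideanSpace ℝ (Fin 4)).hasFDerivAt.comp_hasDerivAt r h

lemma hXphi (lam r φ : ℝ) :
    HasDerivAt (fun ψ => X lam r ψ)
      ((WithLp.equiv 2 (Fin 4 → ℝ)).symm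
        ![-(r * Real.sin φ), -((lam / r) * Real.sin φ), r * Real.cos φ,
          -((lam / r) * Real.cos φ)]) φ := by
  have h : HasDerivAt (fun ψ => (![r * Real.cos ψ, (lam / r) * Real.cos ψ, r * Real.sin ψ,
      -(lam / r) * Real.sin ψ] : Fin 4 → ℝ))
      (![-(r * Real.sin φ), -((lam / r) * Real.sin φ), r * Real.cos φ,
        -((lam / r) * Real.cos φ)]) φ := by
    rw [hasDerivAt_pi]
    intro i
    fin_cases i
    · simpa [mul_comm] using (Real.hasDerivAt_cos φ).const_mul r
    · simpa [mul_comm] using (Real.hasDerivAt_cos φ).const_mul (lam / r)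
    · simpa [mul_comm] using (Real.hasDerivAt_sin φ).const_mul r
    · show HasDerivAt (fun ψ : ℝ => -(lam / r) * Real.sin ψ) (-((lam / r) * Real.cos φ)) φ
      simpa [mul_comm] using (Real.hasDerivAt_sin φ).const_mul (-(lam / r))
  exact ((PiLp.continuousLinearEquiv 2 ℝ (fun _ : Fin 4 => ℝ)).symm :
    (Fin 4 → ℝ) →L[ℝ] EuclideanSpace ℝ (Fin 4)).hasFDerivAt.comp_hasDerivAt φ h

set_option maxHeartbeats 1000000 in
theorem stmt4 (lam : ℝ) (h0 : 0 < |lam|) (h12 : |lam| < 1 / 2)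
    (ε : ℝ) (hε : ε = 1 ∨ ε = -1) (φ : ℝ) :
    ‖nu lam ε φ‖ = 1 ∧
    (∃ t : ℝ, nu lam ε φ =
      t • deriv (fun s => X lam s φ) (Real.sqrt (1 / 2 + ε * Real.sqrt (1 / 4 - lam ^ 2)))) ∧
    (inner ℝ (nu lam ε φ)
      (deriv (fun ψ => X lam (Real.sqrt (1 / 2 + ε * Real.sqrt (1 / 4 - lam ^ 2))) ψ) φ) : ℝ) = 0 ∧
    nu lam ε φ =
      Real.sqrt (1 - 4 * lam ^ 2) •
          X lam (Real.sqrt (1 / 2 + ε * Real.sqrt (1 / 4 - lam ^ 2))) φ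
        - (ε * 2 * lam) •
          Jmap (X lam (Real.sqrt (1 / 2 + ε * Real.sqrt (1 / 4 - lam ^ 2))) φ) := by
  have hε2 : ε ^ 2 = 1 := by rcases hε with rfl | rfl <;> norm_num
  have hl2 : lam ^ 2 < 1 / 4 := by nlinarith [sq_abs lam, abs_nonneg lam]
  have hl0 : 0 < lam ^ 2 := by nlinarith [sq_abs lam]
  set s := Real.sqrt (1 / 4 - lam ^ 2) with hsdef
  have hs2 : s ^ 2 = 1 / 4 - lam ^ 2 := Real.sq_sqrt (by linarith)
  have hs0 : 0 ≤ s := Real.sqrt_nonneg _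
  have hslt : s < 1 / 2 := by nlinarith
  have hr2pos : 0 < 1 / 2 + ε * s := by rcases hε with rfl | rfl <;> nlinarith
  set r := Real.sqrt (1 / 2 + ε * s) with hrdef
  have hr2 : r ^ 2 = 1 / 2 + ε * s := Real.sq_sqrt hr2pos.le
  have hrpos : 0 < r := Real.sqrt_pos.2 hr2pos
  have hrne : r ≠ 0 := hrpos.ne'
  have hkey : lam ^ 2 = r ^ 2 - r ^ 4 := by
    have h4 : r ^ 4 = (1 / 2 + ε * s) ^ 2 := by rw [show r^4 = (r^2)^2 by ring, hr2]
    nlinarith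
  have hkey2 : ε * r ^ 2 = 2 * s * r ^ 2 + ε * 2 * lam ^ 2 := by
    linear_combination (ε - 2*s) * hr2 - 2*ε*hs2 + s*hε2
  have h4l : Real.sqrt (1 - 4 * lam ^ 2) = 2 * s := by
    rw [show (1 - 4 * lam ^ 2) = (2 * s) ^ 2 by nlinarith]
    exact Real.sqrt_sq (by positivity)
  have habs : |ε| = 1 := by rcases hε with rfl | rfl <;> norm_num
  have hcs := Real.sin_sq_add_cos_sq φ
  have hnu : nu lam ε φ = ε • ((WithLp.equiv 2 (Fin 4 → ℝ)).symm
      ![r * Real.cos φ, -(lam / r) * Real.cos φ, r * Real.sin φ, (lam / r) * Real.sin φ]) := rfl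
  refine ⟨?_, ⟨ε * r, ?_⟩, ?_, ?_⟩
  · rw [hnu, norm_smul, Real.norm_eq_abs, habs, one_mul, EuclideanSpace.norm_eq]
    simp only [WithLp.equiv_symm_apply, PiLp.toLp_apply, WithLp.ofLp_toLp, Fin.sum_univ_four, Matrix.cons_val_zero,
      Matrix.cons_val_one, Matrix.head_cons, Matrix.cons_val_two, Matrix.tail_cons,
      Matrix.cons_val_three, Real.norm_eq_abs, sq_abs]
    rw [show (r * Real.cos φ) ^ 2 + (-(lam / r) * Real.cos φ) ^ 2 + (r * Real.sin φ) ^ 2 +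
        (lam / r * Real.sin φ) ^ 2 = 1 from by field_simp; nlinarith [hcs, hkey]]
    exact Real.sqrt_one
  · rw [hnu, (hXr lam φ r hrne).deriv]
    ext i
    fin_cases i <;>
      simp only [WithLp.equiv_symm_apply, PiLp.toLp_apply, WithLp.ofLp_toLp, PiLp.smul_apply, smul_eq_mul,
        Matrix.cons_val_zero, Matrix.cons_val_one, Matrix.head_cons, Matrix.cons_val_two,
        Matrix.tail_cons, Matrix.cons_val_three, Fin.isValue, Fin.reduceFinMk, Matrix.cons_val] <;>
      field_simp <;> ring
  · rw [hnu, (hXphi lam r φ).deriv]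
    simp only [WithLp.equiv_symm_apply, PiLp.toLp_apply, WithLp.ofLp_toLp, PiLp.inner_apply, RCLike.inner_apply,
      Fin.sum_univ_four, PiLp.smul_apply, smul_eq_mul, Matrix.cons_val_zero,
      Matrix.cons_val_one, Matrix.head_cons, Matrix.cons_val_two, Matrix.tail_cons,
      Matrix.cons_val_three, conj_trivial]
    ring
  · rw [hnu, h4l]
    ext i
    fin_cases i <;>
      simp only [X, Jmap, WithLp.equiv_symm_apply, PiLp.toLp_apply, WithLp.ofLp_toLp, PiLp.smul_apply, PiLp.sub_apply,
        smul_eq_mul, Matrix.cons_val_zero, Matrix.cons_val_one, Matrix.head_cons,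
        Matrix.cons_val_two, Matrix.tail_cons, Matrix.cons_val_three, Fin.isValue, Fin.reduceFinMk, Matrix.cons_val]
    · field_simp
      linear_combination (Real.cos φ) * hkey2
    · field_simp
      linear_combination (2*ε*lam*Real.cos φ) * hr2 + (2*s*lam*Real.cos φ) * hε2
    · field_simp
      linear_combination (Real.sin φ) * hkey2
    · field_simp
      linear_combination (-2*ε*lam*Real.sin φ) * hr2 + (-2*s*lam*Real.sin φ) * hε2
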